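/- Let f, ψ : ℝ → ℝ be square-integrable and let ψ₂ : ℝ → ℝ be integrable. Define W(a, b) = ∫_ℝ f(y)·|a|^{−1/2}·ψ((y − b)/a) dy for a ≠ 0, b ∈ ℝ. Then for every x ∈ ℝ, the large-scale part of the reconstruction integral is uniformly bounded: ∫_{|a| ≥ 1} ∫_ℝ a^{−2}·|W(a, b)|·|a|^{−1/2}·|ψ₂((x − b)/a)| db da ≤ 4·‖f‖_{L²}·‖ψ‖_{L²}·‖ψ₂‖_{L¹}. -/

import Mathlib

open MeasureTheory Real Set
open scoped RealInnerProductSpace ENNReal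

section Aux

lemma emb_affine (α β : ℝ) (hα : α ≠ 0) :
    MeasurableEmbedding (fun y : ℝ => α * y + β) :=
  (((Homeomorph.mulLeft₀ α hα).trans
    (Homeomorph.addRight β)).isClosedEmbedding).measurableEmbedding

lemma map_affine (α β : ℝ) (hα : α ≠ 0) :
    Measure.map (fun y : ℝ => α * y + β) (volume : Measure ℝ)
      = ENNReal.ofReal |α⁻¹| • volume := by
  have h : (fun y : ℝ => α * y + β) = (fun x : ℝ => x + β) ∘ (fun y : ℝ => α * y) := rfl
  rw [h, ← Measure.map_map (measurable_add_const β) (measurable_const_mul α),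
    Real.map_volume_mul_left hα, Measure.map_smul, map_add_right_eq_self]

lemma memLp_comp_affine {h : ℝ → ℝ} {p : ℝ≥0∞} (hh : MemLp h p (volume : Measure ℝ))
    (α β : ℝ) (hα : α ≠ 0) : MemLp (fun y => h (α * y + β)) p (volume : Measure ℝ) := by
  have h1 := hh.smul_measure (c := ENNReal.ofReal |α⁻¹|) ENNReal.ofReal_ne_top
  rw [← map_affine α β hα] at h1
  exact ((emb_affine α β hα).memLp_map_measure_iff).mp h1

lemma eLpNorm_comp_affine (h : ℝ → ℝ) (p : ℝ≥0∞) (hp : p ≠ ∞)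
    (α β : ℝ) (hα : α ≠ 0) :
    eLpNorm (fun y => h (α * y + β)) p (volume : Measure ℝ)
      = ENNReal.ofReal |α⁻¹| ^ (1 / p.toReal) * eLpNorm h p (volume : Measure ℝ) := by
  have hc : (fun y => h (α * y + β)) = h ∘ (fun y : ℝ => α * y + β) := rfl
  rw [hc, ← (emb_affine α β hα).eLpNorm_map_measure, map_affine α β hα,
    eLpNorm_smul_measure_of_ne_top hp, smul_eq_mul, ENNReal.toReal_div, ENNReal.toReal_one]

lemma integral_comp_affine (h : ℝ → ℝ) (α β : ℝ) (hα : α ≠ 0) :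
    (∫ y : ℝ, h (α * y + β)) = |α⁻¹| * ∫ y : ℝ, h y := by
  have hc : (fun y => h (α * y + β)) = h ∘ (fun y : ℝ => α * y + β) := rfl
  rw [hc]
  rw [show (∫ y : ℝ, (h ∘ fun y : ℝ => α * y + β) y) = ∫ y, h y ∂(Measure.map (fun y : ℝ => α * y + β) volume) from ((emb_affine α β hα).integral_map h).symm]
  rw [map_affine α β hα, integral_smul_measure,
    ENNReal.toReal_ofReal (abs_nonneg _), smul_eq_mul]

end Aux

/-- Eq. (19) in the appendix proof of Theorem 3.2: the large-scale part (`|a| ≥ 1`) of the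
wavelet reconstruction integral is uniformly bounded by `4 · ‖f‖₂ · ‖ψ‖₂ · ‖ψ₂‖₁`. -/
theorem large_scale_reconstruction_bounded
    (f ψ ψ₂ : ℝ → ℝ) (W : ℝ → ℝ → ℝ)
    (hf_L2 : MemLp f 2 (volume : Measure ℝ))
    (hψ_L2 : MemLp ψ 2 (volume : Measure ℝ))
    (hψ₂_L1 : Integrable ψ₂)
    (hW : ∀ a : ℝ, a ≠ 0 → ∀ b : ℝ,
      W a b = ∫ y : ℝ, f y * (|a| ^ (-(1 : ℝ) / 2) * ψ ((y - b) / a))) :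
    ∀ x : ℝ,
      (∫ a in {a : ℝ | 1 ≤ |a|},
          ∫ b : ℝ, (a ^ 2)⁻¹ * |W a b| * (|a| ^ (-(1 : ℝ) / 2) * |ψ₂ ((x - b) / a)|)) ≤
        4 * (eLpNorm f 2 (volume : Measure ℝ)).toReal *
          (eLpNorm ψ 2 (volume : Measure ℝ)).toReal *
          (eLpNorm ψ₂ 1 (volume : Measure ℝ)).toReal := by
  intro x
  set Nf := (eLpNorm f 2 (volume : Measure ℝ)).toReal with hNf_def
  set Nψ := (eLpNorm ψ 2 (volume : Measure ℝ)).toReal with hNψ_def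
  set N₂ := (eLpNorm ψ₂ 1 (volume : Measure ℝ)).toReal with hN₂_def
  -- `N₂` is the integral of `|ψ₂|`
  have hψ₂m : MemLp ψ₂ 1 (volume : Measure ℝ) := memLp_one_iff_integrable.mpr hψ₂_L1
  have hN₂ : N₂ = ∫ y : ℝ, |ψ₂ y| := by
    rw [hN₂_def, hψ₂m.eLpNorm_eq_integral_rpow_norm one_ne_zero ENNReal.one_ne_top]
    simp only [ENNReal.toReal_one, Real.rpow_one, inv_one, Real.norm_eq_abs]
    exact ENNReal.toReal_ofReal (integral_nonneg fun y => abs_nonneg _)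
  -- Cauchy–Schwarz bound on `|W a b|`
  have hCS : ∀ a : ℝ, a ≠ 0 → ∀ b : ℝ, |W a b| ≤ Nf * Nψ := by
    intro a ha b
    have hpos : (0 : ℝ) < |a| := abs_pos.mpr ha
    set T : ℝ → ℝ := fun y => a⁻¹ * y + -(b / a) with hT_def
    have hT : ∀ y : ℝ, T y = (y - b) / a := fun y => by rw [hT_def]; ring
    set c : ℝ := |a| ^ (-(1 : ℝ) / 2) with hc_def
    set g : ℝ → ℝ := fun y => c * ψ (T y) with hg_def
    have hψc : MemLp (fun y => ψ (T y)) 2 (volume : Measure ℝ) :=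
      memLp_comp_affine hψ_L2 _ _ (inv_ne_zero ha)
    have hg2 : MemLp g 2 (volume : Measure ℝ) := hψc.const_mul _
    have heg : eLpNorm g 2 (volume : Measure ℝ) = eLpNorm ψ 2 (volume : Measure ℝ) := by
      have h1 : eLpNorm (fun y => ψ (T y)) 2 (volume : Measure ℝ)
          = ENNReal.ofReal |a| ^ ((1 : ℝ) / 2) * eLpNorm ψ 2 (volume : Measure ℝ) := by
        rw [hT_def, eLpNorm_comp_affine ψ 2 (by norm_num) _ _ (inv_ne_zero ha)]
        norm_num
      have hgs : g = c • fun y => ψ (T y) := rfl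
      have hcoe : ‖c‖ₑ = ENNReal.ofReal |a| ^ (-(1 : ℝ) / 2) := by
        rw [hc_def, Real.enorm_eq_ofReal (Real.rpow_nonneg (abs_nonneg a) _),
          ENNReal.ofReal_rpow_of_pos hpos]
      rw [hgs, eLpNorm_const_smul, h1, ← mul_assoc, hcoe,
        ← ENNReal.rpow_add _ _ (by simpa [ENNReal.ofReal_eq_zero] using not_le.mpr hpos)
          ENNReal.ofReal_ne_top]
      norm_num
    have hFG : (inner ℝ (hf_L2.toLp f) (hg2.toLp g) : ℝ) = ∫ y : ℝ, f y * g y := by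
      rw [L2.inner_def]
      apply integral_congr_ae
      filter_upwards [hf_L2.coeFn_toLp, hg2.coeFn_toLp] with y h1 h2
      simp [h1, h2, RCLike.inner_apply, conj_trivial, mul_comm]
    have hWg : W a b = ∫ y : ℝ, f y * g y := by
      rw [hW a ha b]
      congr 1; funext y; rw [hg_def]; simp only [hT y, hc_def]
    rw [hWg, ← hFG]
    calc |(inner ℝ (hf_L2.toLp f) (hg2.toLp g) : ℝ)| ≤ ‖hf_L2.toLp f‖ * ‖hg2.toLp g‖ :=
          abs_real_inner_le_norm _ _
      _ = Nf * Nψ := by rw [Lp.norm_toLp, Lp.norm_toLp, heg]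
  -- the set of large scales
  have hSeq : {a : ℝ | 1 ≤ |a|} = Iic (-1 : ℝ) ∪ Ici (1 : ℝ) := by
    ext a
    simp only [mem_setOf_eq, mem_union, mem_Iic, mem_Ici, le_abs]
    constructor
    · rintro (h | h)
      · right; exact h
      · left; linarith
    · rintro (h | h)
      · right; linarith
      · left; exact h
  have hSmeas : MeasurableSet {a : ℝ | 1 ≤ |a|} := by
    rw [hSeq]; exact measurableSet_Iic.union measurableSet_Ici
  set hfun : ℝ → ℝ := fun a => |a| ^ (-(3 : ℝ) / 2) with hfun_def
  -- pointwise (in `a`) bound on the inner integral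
  have key : ∀ a : ℝ, 1 ≤ |a| →
      (∫ b : ℝ, (a ^ 2)⁻¹ * |W a b| * (|a| ^ (-(1 : ℝ) / 2) * |ψ₂ ((x - b) / a)|))
        ≤ (Nf * Nψ * ∫ y : ℝ, |ψ₂ y|) * hfun a := by
    intro a ha1
    have ha : a ≠ 0 := by
      intro h; rw [h] at ha1; simp at ha1; linarith
    have hpos : (0 : ℝ) < |a| := abs_pos.mpr ha
    have hrw : (fun b : ℝ => |ψ₂ ((x - b) / a)|)
        = fun b : ℝ => |ψ₂ (-a⁻¹ * b + x / a)| := by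
      funext t; congr 2; ring
    have hα : (-a⁻¹ : ℝ) ≠ 0 := neg_ne_zero.mpr (inv_ne_zero ha)
    have hintc : Integrable (fun b : ℝ => |ψ₂ ((x - b) / a)|) := by
      rw [hrw]
      exact memLp_one_iff_integrable.mp
        (memLp_comp_affine (memLp_one_iff_integrable.mpr hψ₂_L1.abs) _ _ hα)
    have hval : (∫ b : ℝ, |ψ₂ ((x - b) / a)|) = |a| * ∫ y : ℝ, |ψ₂ y| := by
      rw [hrw, integral_comp_affine (fun t => |ψ₂ t|) _ _ hα]
      congr 1
      simp [abs_inv]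
    have hmono : (∫ b : ℝ, (a ^ 2)⁻¹ * |W a b| * (|a| ^ (-(1 : ℝ) / 2) * |ψ₂ ((x - b) / a)|))
        ≤ ∫ b : ℝ, ((a ^ 2)⁻¹ * (Nf * Nψ) * |a| ^ (-(1 : ℝ) / 2)) * |ψ₂ ((x - b) / a)| := by
      apply integral_mono_of_nonneg
      · exact Filter.Eventually.of_forall fun b => by positivity
      · exact hintc.const_mul _
      · refine Filter.Eventually.of_forall fun b => ?_
        calc (a ^ 2)⁻¹ * |W a b| * (|a| ^ (-(1 : ℝ) / 2) * |ψ₂ ((x - b) / a)|)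
            ≤ (a ^ 2)⁻¹ * (Nf * Nψ) * (|a| ^ (-(1 : ℝ) / 2) * |ψ₂ ((x - b) / a)|) := by
              apply mul_le_mul_of_nonneg_right
                (mul_le_mul_of_nonneg_left (hCS a ha b) (by positivity)) (by positivity)
          _ = ((a ^ 2)⁻¹ * (Nf * Nψ) * |a| ^ (-(1 : ℝ) / 2)) * |ψ₂ ((x - b) / a)| := by ring
    refine hmono.trans ?_
    rw [integral_const_mul, hval]
    have h2 : (a ^ 2)⁻¹ = |a| ^ (-(2 : ℝ)) := by
      rw [Real.rpow_neg (abs_nonneg a),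
        show ((2 : ℝ)) = ((2 : ℕ) : ℝ) by norm_num, Real.rpow_natCast, sq_abs]
    have h3 : |a| ^ (-(2 : ℝ)) * |a| ^ (-(1 : ℝ) / 2) * |a| ^ (1 : ℝ) = hfun a := by
      rw [← Real.rpow_add hpos, ← Real.rpow_add hpos, hfun_def]
      norm_num
    apply le_of_eq
    calc (a ^ 2)⁻¹ * (Nf * Nψ) * |a| ^ (-(1 : ℝ) / 2) * (|a| * ∫ y : ℝ, |ψ₂ y|)
        = (Nf * Nψ * ∫ y : ℝ, |ψ₂ y|)
            * (|a| ^ (-(2 : ℝ)) * |a| ^ (-(1 : ℝ) / 2) * |a| ^ (1 : ℝ)) := by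
          rw [h2, Real.rpow_one]; ring
      _ = (Nf * Nψ * ∫ y : ℝ, |ψ₂ y|) * hfun a := by rw [h3]
  -- integrability and value of the outer integral of `hfun`
  have hIoi : IntegrableOn hfun (Ioi (1 : ℝ)) volume := by
    have h := integrableOn_Ioi_rpow_of_lt (show (-(3 : ℝ) / 2) < -1 by norm_num) one_pos
    exact h.congr_fun (fun t ht => by
      rw [hfun_def]; simp only; rw [abs_of_pos (lt_trans one_pos ht)]) measurableSet_Ioi
  have hIci : IntegrableOn hfun (Ici (1 : ℝ)) volume :=
    Iff.mpr integrableOn_Ici_iff_integrableOn_Ioi hIoi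
  have hIic : IntegrableOn hfun (Iic (-1 : ℝ)) volume := by
    have h1 : (Neg.neg ⁻¹' (Iic (-1 : ℝ))) = Ici (1 : ℝ) := by
      ext t
      simp only [mem_preimage, mem_Iic, mem_Ici]
      constructor <;> intro h <;> linarith
    have hres : volume.restrict (Iic (-1 : ℝ))
        = Measure.map Neg.neg (volume.restrict (Ici (1 : ℝ))) := by
      conv_lhs => rw [← Measure.map_neg_eq_self (volume : Measure ℝ)]
      rw [Measure.restrict_map measurable_neg measurableSet_Iic, h1]
    have hembneg : MeasurableEmbedding (Neg.neg : ℝ → ℝ) :=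
      (Homeomorph.neg ℝ).isClosedEmbedding.measurableEmbedding
    rw [IntegrableOn, hres, hembneg.integrable_map_iff]
    have heq : (hfun ∘ Neg.neg) = hfun := by
      funext t; simp [hfun_def, abs_neg]
    rw [heq]
    exact hIci
  have hdisj : Disjoint (Iic (-1 : ℝ)) (Ici (1 : ℝ)) :=
    Iic_disjoint_Ici.mpr (by norm_num)
  have hSint : IntegrableOn hfun {a : ℝ | 1 ≤ |a|} volume := by
    rw [hSeq]; exact hIic.union hIci
  have hIoi_val : (∫ t in Ioi (1 : ℝ), hfun t) = 2 := by
    have hEq : EqOn hfun (fun t : ℝ => t ^ (-(3 : ℝ) / 2)) (Ioi 1) := fun t ht => by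
      simp only [hfun_def]
      rw [abs_of_pos (lt_trans one_pos ht)]
    rw [setIntegral_congr_fun measurableSet_Ioi hEq,
      integral_Ioi_rpow_of_lt (show (-(3 : ℝ) / 2) < -1 by norm_num) one_pos]
    norm_num [Real.one_rpow]
  have hIci_val : (∫ t in Ici (1 : ℝ), hfun t) = 2 := by
    rw [integral_Ici_eq_integral_Ioi]; exact hIoi_val
  have hIic_val : (∫ t in Iic (-1 : ℝ), hfun t) = 2 := by
    calc (∫ t in Iic (-1 : ℝ), hfun t) = ∫ t in Iic (-1 : ℝ), hfun (-t) := by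
          apply setIntegral_congr_fun measurableSet_Iic
          intro t _; simp [hfun_def, abs_neg]
      _ = ∫ t in Ioi (1 : ℝ), hfun t := by
          simpa using integral_comp_neg_Iic (-1 : ℝ) hfun
      _ = 2 := hIoi_val
  have hS_val : (∫ a in {a : ℝ | 1 ≤ |a|}, hfun a) = 4 := by
    rw [hSeq, setIntegral_union hdisj measurableSet_Ici hIic hIci, hIic_val, hIci_val]
    norm_num
  -- final assembly
  calc (∫ a in {a : ℝ | 1 ≤ |a|},
        ∫ b : ℝ, (a ^ 2)⁻¹ * |W a b| * (|a| ^ (-(1 : ℝ) / 2) * |ψ₂ ((x - b) / a)|))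
      ≤ ∫ a in {a : ℝ | 1 ≤ |a|}, (Nf * Nψ * ∫ y : ℝ, |ψ₂ y|) * hfun a := by
        apply integral_mono_of_nonneg
        · exact Filter.Eventually.of_forall fun a =>
            integral_nonneg fun b => by positivity
        · exact hSint.const_mul _
        · filter_upwards [ae_restrict_mem hSmeas] with a ha
          exact key a ha
    _ = (Nf * Nψ * ∫ y : ℝ, |ψ₂ y|) * ∫ a in {a : ℝ | 1 ≤ |a|}, hfun a :=
        integral_const_mul _ _
    _ = 4 * Nf * Nψ * N₂ := by rw [hS_val, ← hN₂]; ring
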